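/- Let f : ℝⁿ → ℝᵐ be an asymptotically affine function. For every ε > 0 there exist a compact set K ⊂ ℝⁿ, a positive integer N = N(f, K, ε), and a radial neural network whose hidden layers all use the Step-ReLU activation, with N hidden layers of widths (n+1, n+2, …, n+N) (input width n, output width m), such that its feedforward function F : ℝⁿ → ℝᵐ satisfies |F(x) − f(x)| < ε for all x ∈ ℝⁿ. -/

import Mathlib

open scoped Classical
open Metric Set

noncomputable section

abbrev Euc (n : ℕ) := EuclideanSpace ℝ (Fin n)

def mulVecE {m n : ℕ} (W : Matrix (Fin m) (Fin n) ℝ) (v : Euc n) : Euc m :=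
  WithLp.toLp 2 (fun j => ∑ k, W j k * v k)

/-- Step-ReLU on ℝⁿ: the radial rescaling function sending v to v if ‖v‖ ≥ 1
and to 0 if ‖v‖ < 1. -/
def stepReLU {n : ℕ} (v : Euc n) : Euc n := if 1 ≤ ‖v‖ then v else 0

/-- N witnesses the covering property for f on K at scale ε: there are points
c₁, …, c_N ∈ K and radii r₁, …, r_N ∈ (0,1) such that the balls B_{rᵢ}(cᵢ)
cover K and f(B_{rᵢ}(cᵢ) ∩ K) ⊆ B_ε(f cᵢ) for all i. -/
def IsCoverSize {n m : ℕ} (f : Euc n → Euc m) (K : Set (Euc n)) (ε : ℝ) (N : ℕ) : Prop :=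
  ∃ (c : Fin N → Euc n) (r : Fin N → ℝ),
    (∀ i, c i ∈ K) ∧ (∀ i, r i ∈ Set.Ioo (0:ℝ) 1) ∧
    (K ⊆ ⋃ i, Metric.ball (c i) (r i)) ∧
    (∀ i, f '' (Metric.ball (c i) (r i) ∩ K) ⊆ Metric.ball (f (c i)) ε)

/-- N(f, K, ε): the minimal N as in IsCoverSize. -/
def coverNum {n m : ℕ} (f : Euc n → Euc m) (K : Set (Euc n)) (ε : ℝ) : ℕ :=
  sInf {N | IsCoverSize f K ε N}

/-- A continuous f : ℝⁿ → ℝᵐ is asymptotically affine if there is an affine map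
L(x) = A x + b₀ such that for every ε > 0 there is a compact K with
‖L x − f x‖ < ε for all x outside K. -/
def IsAsymptoticallyAffine {n m : ℕ} (f : Euc n → Euc m) : Prop :=
  Continuous f ∧
    ∃ (A : Matrix (Fin m) (Fin n) ℝ) (b₀ : Euc m),
      ∀ ε > (0:ℝ), ∃ K : Set (Euc n), IsCompact K ∧
        ∀ x ∉ K, ‖(mulVecE A x + b₀) - f x‖ < ε

/-- The partial feedforward functions of a radial neural network with input width n,
hidden widths (n+1, n+2, …), Step-ReLU activations at every hidden layer, weights W and
biases b: after i hidden layers the output lies in ℝ^{n+i}. -/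
def hiddenFF (n : ℕ) (W : ∀ i : ℕ, Matrix (Fin (n + i + 1)) (Fin (n + i)) ℝ)
    (b : ∀ i : ℕ, Euc (n + i + 1)) : (i : ℕ) → Euc n → Euc (n + i)
  | 0 => fun x => x
  | (i+1) => fun x => stepReLU (mulVecE (W i) (hiddenFF n W b i x) + b i)

/-! ### Auxiliary machinery -/

lemma sum_single_of (p a : ℕ) (F : ℕ → ℝ) (ha : a < p)
    (h : ∀ k, k < p → k ≠ a → F k = 0) : ∑ k ∈ Finset.range p, F k = F a :=
  Finset.sum_eq_single_of_mem a (Finset.mem_range.2 ha)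
    (fun k hk hne => h k (Finset.mem_range.1 hk) hne)

lemma sum_zero_of (p : ℕ) (F : ℕ → ℝ) (h : ∀ k, k < p → F k = 0) :
    ∑ k ∈ Finset.range p, F k = 0 :=
  Finset.sum_eq_zero (fun k hk => h k (Finset.mem_range.1 hk))

lemma sum_pair_of (p a b : ℕ) (F : ℕ → ℝ) (ha : a < p) (hb : b < p) (hab : a ≠ b)
    (h : ∀ k, k < p → k ≠ a → k ≠ b → F k = 0) :
    ∑ k ∈ Finset.range p, F k = F a + F b := by
  rw [← Finset.sum_pair hab]
  refine (Finset.sum_subset ?_ ?_).symm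
  · intro x hx
    rcases Finset.mem_insert.1 hx with h1 | h1
    · exact Finset.mem_range.2 (h1 ▸ ha)
    · rw [Finset.mem_singleton] at h1; exact Finset.mem_range.2 (h1 ▸ hb)
  · intro x hx hx'
    refine h x (Finset.mem_range.1 hx) ?_ ?_
    · intro e; exact hx' (by simp [e])
    · intro e; exact hx' (by simp [e])

def extF {n : ℕ} (x : Euc n) : ℕ → ℝ := fun k => if h : k < n then x ⟨k, h⟩ else 0

def toE (p : ℕ) (V : ℕ → ℝ) : Euc p := WithLp.toLp 2 (fun k => V (k : ℕ))

lemma norm_toE (p : ℕ) (V : ℕ → ℝ) :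
    ‖toE p V‖ = Real.sqrt (∑ k ∈ Finset.range p, (V k) ^ 2) := by
  rw [EuclideanSpace.norm_eq]
  congr 1
  rw [← Fin.sum_univ_eq_sum_range (fun k => (V k) ^ 2) p]
  refine Finset.sum_congr rfl (fun i _ => ?_)
  simp [toE, Real.norm_eq_abs, sq_abs]

/-- live state: coordinates `l * (x - g)` then `3/5` at index n, zero above. -/
def liveF (n : ℕ) (l : ℝ) (g x : Euc n) : ℕ → ℝ := fun k =>
  if k < n then l * (extF x k - extF g k) else if k = n then 3/5 else 0

/-- marker for "zeroed at step q": single 2 at coordinate n+q+1. -/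
def markF (n q : ℕ) : ℕ → ℝ := fun k => if k = n + q + 1 then 2 else 0

def Mfun (n : ℕ) (lam : ℕ → ℝ) (γ : ℕ → Euc n) (i : ℕ) : ℕ → ℕ → ℝ := fun j k =>
  if i = 0 then (if j < n ∧ k = j then lam 0 else 0)
  else if j < n then
    (if k = j then lam i / lam (i-1)
     else if k = n then (5/3) * lam i * (extF (γ (i-1)) j - extF (γ i) j) else 0)
  else if j = n + i then (if k = n then -(10/3) else if n + 1 ≤ k then -1 else 0)
  else (if k = j then 1 else 0)

def Bfun (n : ℕ) (lam : ℕ → ℝ) (γ : ℕ → Euc n) (i : ℕ) : ℕ → ℝ := fun j =>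
  if i = 0 then (if j < n then -(lam 0 * extF (γ 0) j) else if j = n then 3/5 else 0)
  else (if j = n + i then 2 else 0)

def Wmat (n : ℕ) (lam : ℕ → ℝ) (γ : ℕ → Euc n) (i : ℕ) :
    Matrix (Fin (n+i+1)) (Fin (n+i)) ℝ := fun j k => Mfun n lam γ i j k

def Bvec (n : ℕ) (lam : ℕ → ℝ) (γ : ℕ → Euc n) (i : ℕ) : Euc (n+i+1) :=
  WithLp.toLp 2 (fun j => Bfun n lam γ i j)

lemma affine_apply (n : ℕ) (lam : ℕ → ℝ) (γ : ℕ → Euc n) (i : ℕ) (V : ℕ → ℝ) :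
    mulVecE (Wmat n lam γ i) (toE (n+i) V) + Bvec n lam γ i =
      toE (n+i+1) (fun j => (∑ k ∈ Finset.range (n+i), Mfun n lam γ i j k * V k)
        + Bfun n lam γ i j) := by
  ext j
  show (mulVecE (Wmat n lam γ i) (toE (n+i) V)) j + (Bvec n lam γ i) j = _
  simp only [mulVecE, Wmat, Bvec, toE, PiLp.toLp_apply]
  rw [← Fin.sum_univ_eq_sum_range (fun k => Mfun n lam γ i (j:ℕ) k * V k) (n+i)]
section Steps
variable (n : ℕ) (lam : ℕ → ℝ) (γ : ℕ → Euc n)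

lemma step0 (x : Euc n) (j : ℕ) :
    (∑ k ∈ Finset.range (n+0), Mfun n lam γ 0 j k * extF x k) + Bfun n lam γ 0 j
      = liveF n (lam 0) (γ 0) x j := by
  rcases lt_or_ge j n with hjn | hjn
  · rw [sum_single_of (n+0) j _ (by omega)
      (fun k hk hne => by
        simp only [Mfun, extF, and_true, true_and, if_true, eq_self_iff_true]
        split_ifs <;> first | (exfalso; omega) | ring | norm_num)]
    simp only [Mfun, Bfun, liveF, extF, and_true, true_and, if_true, eq_self_iff_true]
    split_ifs <;> first | (exfalso; omega) | ring | norm_num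
  · rw [sum_zero_of _ _ (fun k hk => by
      simp only [Mfun, extF, and_true, true_and, if_true, eq_self_iff_true]
      split_ifs <;> first | (exfalso; omega) | ring | norm_num)]
    simp only [Bfun, liveF, extF, and_true, true_and, if_true, eq_self_iff_true]
    split_ifs <;> first | (exfalso; omega) | ring | norm_num

lemma step_live (i : ℕ) (hi : 1 ≤ i) (hlam : lam (i-1) ≠ 0) (x : Euc n) (j : ℕ)
    (hj : j < n + i + 1) :
    (∑ k ∈ Finset.range (n+i), Mfun n lam γ i j k * liveF n (lam (i-1)) (γ (i-1)) x k)
      + Bfun n lam γ i j = liveF n (lam i) (γ i) x j := by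
  have hi0 : i ≠ 0 := by omega
  rcases lt_or_ge j n with hjn | hjn
  · -- live row: support {j, n}
    rw [sum_pair_of (n+i) j n _ (by omega) (by omega) (by omega)
      (fun k hk hka hkb => by
        simp only [Mfun, liveF, extF, and_true, true_and, if_true, eq_self_iff_true]
        split_ifs <;> first | (exfalso; omega) | ring | norm_num)]
    simp only [Mfun, Bfun, liveF, extF, and_true, true_and, if_true, eq_self_iff_true]
    split_ifs <;> first | (exfalso; omega) | (field_simp; ring) | ring | norm_num
  · rcases Nat.lt_or_ge j (n+i) with hji | hji
    · -- middle rows: identity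
      have hjni : j ≠ n + i := by omega
      rw [sum_single_of (n+i) j _ hji
        (fun k hk hne => by
          simp only [Mfun, liveF, extF, and_true, true_and, if_true, eq_self_iff_true]
          split_ifs <;> first | (exfalso; omega) | ring | norm_num)]
      simp only [Mfun, Bfun, liveF, extF, and_true, true_and, if_true, eq_self_iff_true]
      split_ifs <;> first | (exfalso; omega) | ring | norm_num
    · -- new flag row j = n+i
      have hjni : j = n + i := by omega
      subst hjni
      rw [sum_single_of (n+i) n _ (by omega)
        (fun k hk hne => by
          simp only [Mfun, liveF, extF, and_true, true_and, if_true, eq_self_iff_true]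
          split_ifs <;> first | (exfalso; omega) | ring | norm_num)]
      simp only [Mfun, Bfun, liveF, extF, and_true, true_and, if_true, eq_self_iff_true]
      split_ifs <;> first | (exfalso; omega) | ring | norm_num

lemma step_mark (i q : ℕ) (hi : 1 ≤ i) (hq : q < i) (j : ℕ) (hj : j < n + i + 1) :
    (∑ k ∈ Finset.range (n+i), Mfun n lam γ i j k * markF n q k)
      + Bfun n lam γ i j = markF n q j := by
  have hi0 : i ≠ 0 := by omega
  rcases lt_or_ge j n with hjn | hjn
  · rw [sum_zero_of _ _ (fun k hk => by
      simp only [Mfun, markF, extF, and_true, true_and, if_true, eq_self_iff_true]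
      split_ifs <;> first | (exfalso; omega) | ring | norm_num)]
    simp only [Bfun, markF, and_true, true_and, if_true, eq_self_iff_true]
    split_ifs <;> first | (exfalso; omega) | ring | norm_num
  · rcases Nat.lt_or_ge j (n+i) with hji | hji
    · -- middle rows: identity
      have hjni : j ≠ n + i := by omega
      rw [sum_single_of (n+i) j _ hji
        (fun k hk hne => by
          simp only [Mfun, markF, extF, and_true, true_and, if_true, eq_self_iff_true]
          split_ifs <;> first | (exfalso; omega) | ring | norm_num)]
      simp only [Mfun, Bfun, markF, and_true, true_and, if_true, eq_self_iff_true]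
      split_ifs <;> first | (exfalso; omega) | ring | norm_num
    · have hjni : j = n + i := by omega
      subst hjni
      rcases Nat.eq_or_lt_of_le (by omega : q + 1 ≤ i) with he | hlt
      · -- q+1 = i : marker coordinate out of range; target = 2
        rw [sum_zero_of _ _ (fun k hk => by
          simp only [markF, and_true, true_and, if_true, eq_self_iff_true]
          split_ifs <;> first | (exfalso; omega) | ring | norm_num)]
        simp only [Bfun, markF, and_true, true_and, if_true, eq_self_iff_true]
        split_ifs <;> first | (exfalso; omega) | ring | norm_num
      · -- q+1 < i
        rw [sum_single_of (n+i) (n+q+1) _ (by omega)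
          (fun k hk hne => by
            simp only [markF, and_true, true_and, if_true, eq_self_iff_true]
            split_ifs <;> first | (exfalso; omega) | ring | norm_num)]
        simp only [Mfun, Bfun, markF, and_true, true_and, if_true, eq_self_iff_true]
        split_ifs <;> first | (exfalso; omega) | ring | norm_num
end Steps
lemma toE_extF {n : ℕ} (x : Euc n) : toE n (extF x) = x := by
  ext k
  simp [toE, extF, Fin.eta]

lemma toE_mark_zero (n p q : ℕ) (h : p ≤ n + q + 1) : toE p (markF n q) = 0 := by
  ext k
  have : (k : ℕ) ≠ n + q + 1 := by omega
  simp [toE, markF, this]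

lemma norm_sub_eq {n : ℕ} (x g : Euc n) :
    ∑ k ∈ Finset.range n, (extF x k - extF g k) ^ 2 = ‖x - g‖ ^ 2 := by
  rw [EuclideanSpace.norm_eq, Real.sq_sqrt (by positivity)]
  rw [← Fin.sum_univ_eq_sum_range (fun k => (extF x k - extF g k) ^ 2) n]
  refine (Finset.sum_congr rfl (fun i _ => ?_)).symm
  simp [extF, Fin.eta, Real.norm_eq_abs, sq_abs, PiLp.sub_apply]

lemma live_sumsq (n ℓ : ℕ) (hℓ : 1 ≤ ℓ) (l : ℝ) (g x : Euc n) :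
    ∑ k ∈ Finset.range (n + ℓ), (liveF n l g x k) ^ 2
      = l ^ 2 * ‖x - g‖ ^ 2 + 9/25 := by
  rw [Finset.range_eq_Ico, ← Finset.sum_Ico_consecutive _ (Nat.zero_le n) (by omega : n ≤ n + ℓ)]
  have h1 : ∑ k ∈ Finset.Ico 0 n, (liveF n l g x k) ^ 2
      = l ^ 2 * ‖x - g‖ ^ 2 := by
    rw [← Finset.range_eq_Ico, ← norm_sub_eq x g, Finset.mul_sum]
    refine Finset.sum_congr rfl (fun k hk => ?_)
    have hk' : k < n := Finset.mem_range.1 hk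
    simp only [liveF, if_pos hk']
    ring
  have h2 : ∑ k ∈ Finset.Ico n (n + ℓ), (liveF n l g x k) ^ 2 = 9/25 := by
    rw [Finset.sum_eq_single_of_mem n (Finset.mem_Ico.2 ⟨le_refl n, by omega⟩)
      (fun k hk hne => by
        have := Finset.mem_Ico.1 hk
        simp only [liveF]
        rw [if_neg (by omega), if_neg hne]
        norm_num)]
    simp only [liveF]
    rw [if_neg (by omega)]
    norm_num
  rw [h1, h2]

lemma live_norm_lt_iff (n ℓ : ℕ) (hℓ : 1 ≤ ℓ) (l ρ : ℝ) (hρ : 0 < ρ) (hl0 : 0 < l)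
    (hl : l * ρ = 4/5) (g x : Euc n) :
    ‖toE (n + ℓ) (liveF n l g x)‖ < 1 ↔ ‖x - g‖ < ρ := by
  rw [norm_toE, live_sumsq n ℓ hℓ l g x]
  rw [show (1:ℝ) = Real.sqrt 1 by rw [Real.sqrt_one]]
  rw [Real.sqrt_lt_sqrt_iff (by positivity)]
  have hD : 0 ≤ ‖x - g‖ := norm_nonneg _
  constructor
  · intro h
    by_contra hge
    push_neg at hge
    have h45 : (4/5:ℝ) ≤ l * ‖x - g‖ := by
      rw [← hl]
      nlinarith
    nlinarith [h45]
  · intro h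
    have h2 : l * ‖x - g‖ < l * ρ := by nlinarith
    have h3 : 0 ≤ l * ‖x - g‖ := by positivity
    nlinarith [h2, h3]

lemma mark_norm_ge (n p q : ℕ) (h : n + q + 1 < p) :
    1 ≤ ‖toE p (markF n q)‖ := by
  rw [norm_toE]
  have h4 : (4:ℝ) ≤ ∑ k ∈ Finset.range p, (markF n q k) ^ 2 := by
    have hm : markF n q (n+q+1) = 2 := by simp [markF]
    have hs := Finset.single_le_sum (f := fun k => (markF n q k) ^ 2)
      (fun k _ => sq_nonneg _) (Finset.mem_range.2 h)
    simp only [hm] at hs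
    norm_num at hs
    exact hs
  have : Real.sqrt 4 ≤ Real.sqrt (∑ k ∈ Finset.range p, (markF n q k) ^ 2) :=
    Real.sqrt_le_sqrt h4
  have h2 : Real.sqrt 4 = 2 := by
    rw [show (4:ℝ) = 2^2 by norm_num, Real.sqrt_sq (by norm_num)]
  linarith

/-- The invariant: after i+1 hidden layers each input is either live or marked. -/
lemma invariant (n : ℕ) (lam : ℕ → ℝ) (γ : ℕ → Euc n) (ρ : ℕ → ℝ)
    (hρ : ∀ i, 0 < ρ i) (hl0 : ∀ i, 0 < lam i) (hl : ∀ i, lam i * ρ i = 4/5)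
    (i : ℕ) (x : Euc n) :
    (hiddenFF n (Wmat n lam γ) (Bvec n lam γ) (i+1) x
        = toE (n+i+1) (liveF n (lam i) (γ i) x) ∧ ∀ q, q ≤ i → ρ q ≤ ‖x - γ q‖) ∨
    (∃ q, q ≤ i ∧ hiddenFF n (Wmat n lam γ) (Bvec n lam γ) (i+1) x
        = toE (n+i+1) (markF n q) ∧ ‖x - γ q‖ < ρ q) := by
  induction i with
  | zero =>
      have hx : hiddenFF n (Wmat n lam γ) (Bvec n lam γ) 0 x = toE (n+0) (extF x) := by
        ext k
        show x k = extF x (k : ℕ)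
        have hk : (k : ℕ) < n := by omega
        simp [extF, hk, Fin.eta]
      have hpre : mulVecE (Wmat n lam γ 0) (hiddenFF n (Wmat n lam γ) (Bvec n lam γ) 0 x)
          + Bvec n lam γ 0 = toE (n+1) (liveF n (lam 0) (γ 0) x) := by
        rw [hx, affine_apply]
        ext j
        simp only [toE]
        exact step0 n lam γ x j
      have hff : hiddenFF n (Wmat n lam γ) (Bvec n lam γ) 1 x
          = stepReLU (toE (n+1) (liveF n (lam 0) (γ 0) x)) := by
        rw [← hpre]; rfl
      rcases lt_or_ge ‖x - γ 0‖ (ρ 0) with hca | hca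
      · right
        refine ⟨0, le_refl 0, ?_, hca⟩
        rw [hff, stepReLU, if_neg (by
          rw [not_le]
          exact (live_norm_lt_iff n 1 (le_refl 1) (lam 0) (ρ 0) (hρ 0) (hl0 0) (hl 0)
            (γ 0) x).2 hca), toE_mark_zero n (n+1) 0 (by omega)]
      · left
        constructor
        · rw [hff, stepReLU, if_pos (by
            by_contra hcon
            rw [not_le] at hcon
            have := (live_norm_lt_iff n 1 (le_refl 1) (lam 0) (ρ 0) (hρ 0) (hl0 0) (hl 0)
              (γ 0) x).1 hcon
            exact absurd this (not_lt.2 hca))]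
        · intro q hq
          interval_cases q
          exact hca
  | succ i ih =>
      have hstep : hiddenFF n (Wmat n lam γ) (Bvec n lam γ) (i+2) x
          = stepReLU (mulVecE (Wmat n lam γ (i+1))
              (hiddenFF n (Wmat n lam γ) (Bvec n lam γ) (i+1) x) + Bvec n lam γ (i+1)) := rfl
      rcases ih with ⟨hlive, havoid⟩ | ⟨q, hq, hmark, hin⟩
      · have hpre : mulVecE (Wmat n lam γ (i+1))
            (hiddenFF n (Wmat n lam γ) (Bvec n lam γ) (i+1) x) + Bvec n lam γ (i+1)
            = toE (n+i+2) (liveF n (lam (i+1)) (γ (i+1)) x) := by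
          rw [hlive]
          refine (affine_apply n lam γ (i+1) (liveF n (lam i) (γ i) x)).trans ?_
          ext j
          exact step_live n lam γ (i+1) (by omega) (ne_of_gt (hl0 i)) x (j : ℕ) (by omega)
        rcases lt_or_ge ‖x - γ (i+1)‖ (ρ (i+1)) with hca | hca
        · right
          refine ⟨i+1, le_refl _, ?_, hca⟩
          rw [hstep, hpre, stepReLU, if_neg (by
            rw [not_le]
            have := (live_norm_lt_iff n (i+2) (by omega) (lam (i+1)) (ρ (i+1))
              (hρ (i+1)) (hl0 (i+1)) (hl (i+1)) (γ (i+1)) x).2 hca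
            exact this)]
          exact (toE_mark_zero n (n+i+2) (i+1) (by omega)).symm
        · left
          constructor
          · rw [hstep, hpre, stepReLU, if_pos (by
              by_contra hcon
              rw [not_le] at hcon
              have := (live_norm_lt_iff n (i+2) (by omega) (lam (i+1)) (ρ (i+1))
                (hρ (i+1)) (hl0 (i+1)) (hl (i+1)) (γ (i+1)) x).1 hcon
              exact absurd this (not_lt.2 hca))]
            rfl
          · intro q hq
            rcases Nat.lt_or_ge q (i+1) with h | h
            · exact havoid q (by omega)
            · have : q = i + 1 := by omega
              subst this
              exact hca
      · right
        refine ⟨q, by omega, ?_, hin⟩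
        have hpre : mulVecE (Wmat n lam γ (i+1))
            (hiddenFF n (Wmat n lam γ) (Bvec n lam γ) (i+1) x) + Bvec n lam γ (i+1)
            = toE (n+i+2) (markF n q) := by
          rw [hmark]
          refine (affine_apply n lam γ (i+1) (markF n q)).trans ?_
          ext j
          exact step_mark n lam γ (i+1) q (by omega) (by omega) (j : ℕ) (by omega)
        rw [hstep, hpre, stepReLU, if_pos (mark_norm_ge n (n+i+2) q (by omega))]
        rfl
/-! ### Final affine layer -/

def AfunF (n N' : ℕ) {m : ℕ} (lamN : ℝ) (gN : Euc n) (A₀ : Matrix (Fin m) (Fin n) ℝ)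
    (b₀ : Euc m) (y : ℕ → Euc m) : Fin m → ℕ → ℝ := fun j k =>
  if h : k < n then A₀ j ⟨k, h⟩ / lamN
  else if k = n then (5/3) * ((mulVecE A₀ gN) j + b₀ j - y N' j)
  else (y (k - n - 1) j - y N' j) / 2

def Amat (n N' : ℕ) {m : ℕ} (lamN : ℝ) (gN : Euc n) (A₀ : Matrix (Fin m) (Fin n) ℝ)
    (b₀ : Euc m) (y : ℕ → Euc m) : Matrix (Fin m) (Fin (n + N' + 1)) ℝ :=
  fun j k => AfunF n N' lamN gN A₀ b₀ y j (k : ℕ)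

lemma final_apply (n N' : ℕ) {m : ℕ} (lamN : ℝ) (gN : Euc n)
    (A₀ : Matrix (Fin m) (Fin n) ℝ) (b₀ : Euc m) (y : ℕ → Euc m) (V : ℕ → ℝ) :
    mulVecE (Amat n N' lamN gN A₀ b₀ y) (toE (n + N' + 1) V) + y N'
      = WithLp.toLp 2 (fun j => (∑ k ∈ Finset.range (n + N' + 1),
          AfunF n N' lamN gN A₀ b₀ y j k * V k) + y N' j) := by
  ext j
  show (mulVecE (Amat n N' lamN gN A₀ b₀ y) (toE (n + N' + 1) V)) j + (y N') j = _
  simp only [mulVecE, Amat, toE, PiLp.toLp_apply]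
  rw [← Fin.sum_univ_eq_sum_range
    (fun k => AfunF n N' lamN gN A₀ b₀ y j k * V k) (n + N' + 1)]

lemma final_live (n N' : ℕ) {m : ℕ} (lamN : ℝ) (hlam : lamN ≠ 0) (gN : Euc n)
    (A₀ : Matrix (Fin m) (Fin n) ℝ) (b₀ : Euc m) (y : ℕ → Euc m) (x : Euc n) (j : Fin m) :
    (∑ k ∈ Finset.range (n + N' + 1),
        AfunF n N' lamN gN A₀ b₀ y j k * liveF n lamN gN x k) + y N' j
      = (mulVecE A₀ x) j + b₀ j := by
  rw [Finset.range_eq_Ico,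
    ← Finset.sum_Ico_consecutive _ (Nat.zero_le n) (by omega : n ≤ n + N' + 1)]
  have h2 : ∑ k ∈ Finset.Ico n (n + N' + 1),
      AfunF n N' lamN gN A₀ b₀ y j k * liveF n lamN gN x k
      = (mulVecE A₀ gN) j + b₀ j - y N' j := by
    rw [Finset.sum_eq_single_of_mem n (Finset.mem_Ico.2 ⟨le_refl n, by omega⟩)
      (fun k hk hne => by
        have hk' := Finset.mem_Ico.1 hk
        have hv : liveF n lamN gN x k = 0 := by
          simp only [liveF]; rw [if_neg (by omega), if_neg hne]
        rw [hv, mul_zero])]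
    simp only [AfunF, liveF, extF, and_true, true_and, if_true, eq_self_iff_true]
    split_ifs <;> first | (exfalso; omega) | ring
  have h1 : ∑ k ∈ Finset.Ico 0 n,
      AfunF n N' lamN gN A₀ b₀ y j k * liveF n lamN gN x k
      = (mulVecE A₀ x) j - (mulVecE A₀ gN) j := by
    rw [← Finset.range_eq_Ico]
    rw [Finset.sum_congr rfl (fun k hk => by
      have hk' : k < n := Finset.mem_range.1 hk
      show AfunF n N' lamN gN A₀ b₀ y j k * liveF n lamN gN x k
        = (fun k => if h : k < n then A₀ j ⟨k, h⟩ * (x ⟨k, h⟩ - gN ⟨k, h⟩) else 0) k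
      simp only [AfunF, liveF, extF]
      rw [dif_pos hk', if_pos hk', dif_pos hk', dif_pos hk', dif_pos hk']
      field_simp)]
    rw [← Fin.sum_univ_eq_sum_range
      (fun k => if h : k < n then A₀ j ⟨k, h⟩ * (x ⟨k, h⟩ - gN ⟨k, h⟩) else 0) n]
    rw [Finset.sum_congr rfl (fun i _ => by
      show (if h : (i:ℕ) < n then A₀ j ⟨i, h⟩ * (x ⟨(i:ℕ), h⟩ - gN ⟨(i:ℕ), h⟩) else 0)
        = A₀ j i * (x i - gN i)
      rw [dif_pos i.2])]
    simp only [mulVecE]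
    rw [← Finset.sum_sub_distrib]
    exact Finset.sum_congr rfl (fun i _ => by ring)
  rw [h1, h2]
  ring

lemma final_mark (n N' : ℕ) {m : ℕ} (lamN : ℝ) (gN : Euc n)
    (A₀ : Matrix (Fin m) (Fin n) ℝ) (b₀ : Euc m) (y : ℕ → Euc m) (q : ℕ) (hq : q ≤ N')
    (j : Fin m) :
    (∑ k ∈ Finset.range (n + N' + 1),
        AfunF n N' lamN gN A₀ b₀ y j k * markF n q k) + y N' j = y q j := by
  rcases Nat.eq_or_lt_of_le hq with he | hlt
  · subst he
    rw [sum_zero_of _ _ (fun k hk => by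
      have hv : markF n q k = 0 := by simp only [markF]; rw [if_neg (by omega)]
      rw [hv, mul_zero])]
    rw [zero_add]
  · rw [sum_single_of (n + N' + 1) (n + q + 1) _ (by omega)
      (fun k hk hne => by
        have hv : markF n q k = 0 := by simp only [markF]; rw [if_neg hne]
        rw [hv, mul_zero])]
    have hv : markF n q (n + q + 1) = 2 := by simp [markF]
    have ha : AfunF n N' lamN gN A₀ b₀ y j (n + q + 1) = (y q j - y N' j) / 2 := by
      simp only [AfunF]
      rw [dif_neg (by omega), if_neg (by omega)]
      have he : n + q + 1 - n - 1 = q := by omega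
      rw [he]
    rw [hv, ha]
    ring

/-! ### Existence of a cover -/

lemma exists_cover {n m : ℕ} (f : Euc n → Euc m) (hf : Continuous f) (K : Set (Euc n))
    (hK : IsCompact K) (ε : ℝ) (hε : 0 < ε) : ∃ N, IsCoverSize f K ε N := by
  have hc : ∀ x : Euc n, ∃ δ : ℝ, 0 < δ ∧ δ < 1 ∧
      ∀ a, dist a x < δ → dist (f a) (f x) < ε := by
    intro x
    obtain ⟨δ, hδ0, hδ⟩ := Metric.continuous_iff.1 hf x ε hε
    exact ⟨min δ (1/2), lt_min hδ0 (by norm_num),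
      lt_of_le_of_lt (min_le_right _ _) (by norm_num),
      fun a ha => hδ a (lt_of_lt_of_le ha (min_le_left _ _))⟩
  choose δ hδ0 hδ1 hδ using hc
  obtain ⟨t, ht⟩ := hK.elim_finite_subcover
    (fun x : K => Metric.ball (x : Euc n) (δ x))
    (fun x => Metric.isOpen_ball)
    (fun x hx => Set.mem_iUnion.2 ⟨⟨x, hx⟩, Metric.mem_ball_self (hδ0 x)⟩)
  refine ⟨t.card, fun i => ((t.equivFin.symm i : ↥K) : Euc n),
    fun i => δ ((t.equivFin.symm i : ↥K) : Euc n), ?_, ?_, ?_, ?_⟩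
  · intro i; exact ((t.equivFin.symm i : ↥K)).2
  · intro i; exact ⟨hδ0 _, hδ1 _⟩
  · intro x hx
    obtain ⟨i, hi, hball⟩ := Set.mem_iUnion₂.1 (ht hx)
    refine Set.mem_iUnion.2 ⟨t.equivFin ⟨i, hi⟩, ?_⟩
    simpa [Equiv.symm_apply_apply] using hball
  · intro i z hz
    obtain ⟨a, ⟨haball, haK⟩, rfl⟩ := hz
    exact Metric.mem_ball.2 (hδ _ a (Metric.mem_ball.1 haball))
/-- Let f : ℝⁿ → ℝᵐ be asymptotically affine.  For every ε > 0 there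
exist a compact K ⊂ ℝⁿ, a positive integer N = N(f, K, ε), and a radial neural network
with N hidden layers of widths (n+1, …, n+N), Step-ReLU activations at all hidden layers,
and a final affine layer into ℝᵐ, whose feedforward function F satisfies
‖F x − f x‖ < ε for all x ∈ ℝⁿ. -/
theorem universal_approximation_asymp_affine {n m : ℕ}
    (f : Euc n → Euc m) (hf : IsAsymptoticallyAffine f) (ε : ℝ) (hε : 0 < ε) :
    ∃ K : Set (Euc n), IsCompact K ∧
      ∃ N : ℕ, 0 < N ∧ N = coverNum f K ε ∧
        ∃ (W : ∀ i : ℕ, Matrix (Fin (n + i + 1)) (Fin (n + i)) ℝ)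
          (b : ∀ i : ℕ, Euc (n + i + 1))
          (A : Matrix (Fin m) (Fin (n + N)) ℝ) (c : Euc m),
          ∀ x : Euc n, ‖(mulVecE A (hiddenFF n W b N x) + c) - f x‖ < ε := by
  obtain ⟨hfc, A₀, b₀, hAA⟩ := hf
  obtain ⟨K₁, hK₁c, hK₁⟩ := hAA ε hε
  obtain ⟨R₀, hR₀⟩ := hK₁c.isBounded.subset_closedBall (0 : Euc n)
  set R : ℝ := max (R₀ + 2) 3 with hRdef
  have hR3 : (3:ℝ) ≤ R := le_max_right _ _
  have hRK₁ : K₁ ⊆ Metric.closedBall 0 (R - 2) := by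
    intro x hx
    have h1 := hR₀ hx
    rw [Metric.mem_closedBall] at h1 ⊢
    have : R₀ + 2 ≤ R := le_max_left _ _
    linarith
  set K := Metric.closedBall (0 : Euc n) R with hKdef
  have hKc : IsCompact K := isCompact_closedBall 0 R
  obtain ⟨N₀, hN₀⟩ := exists_cover f hfc K hKc ε hε
  have hsetne : {N | IsCoverSize f K ε N}.Nonempty := ⟨N₀, by exact hN₀⟩
  have hmem : IsCoverSize f K ε (coverNum f K ε) := Nat.sInf_mem hsetne
  have hKne : (0 : Euc n) ∈ K := Metric.mem_closedBall_self (by linarith)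
  have hNpos : 0 < coverNum f K ε := by
    rcases Nat.eq_zero_or_pos (coverNum f K ε) with h0 | h
    · exfalso
      rw [h0] at hmem
      obtain ⟨c, r, _, _, hcov, _⟩ := hmem
      obtain ⟨i, _⟩ := Set.mem_iUnion.1 (hcov hKne)
      exact i.elim0
    · exact h
  refine ⟨K, hKc, coverNum f K ε, hNpos, rfl, ?_⟩
  obtain ⟨N', hN'⟩ : ∃ N', coverNum f K ε = N' + 1 := ⟨coverNum f K ε - 1, by omega⟩
  rw [hN'] at hmem ⊢
  obtain ⟨c, r, hcK, hr01, hcov, himg⟩ := hmem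
  -- the data of the network
  set cc : ℕ → Euc n := fun i => if h : i < N' + 1 then c ⟨i, h⟩ else 0 with hccdef
  set rr : ℕ → ℝ := fun i => if h : i < N' + 1 then r ⟨i, h⟩ else 1/2 with hrrdef
  have hrr0 : ∀ i, 0 < rr i := by
    intro i
    simp only [hrrdef]
    by_cases h : i < N' + 1
    · rw [dif_pos h]; exact (hr01 ⟨i, h⟩).1
    · rw [dif_neg h]; norm_num
  have hrr1 : ∀ i, rr i < 1 := by
    intro i
    simp only [hrrdef]
    by_cases h : i < N' + 1
    · rw [dif_pos h]; exact (hr01 ⟨i, h⟩).2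
    · rw [dif_neg h]; norm_num
  have hccR : ∀ i, ‖cc i‖ ≤ R := by
    intro i
    simp only [hccdef]
    by_cases h : i < N' + 1
    · rw [dif_pos h]
      have := hcK ⟨i, h⟩
      rw [hKdef, Metric.mem_closedBall, dist_zero_right] at this
      exact this
    · rw [dif_neg h]; simp; linarith
  set γv : ℕ → Euc n := fun i =>
    if ‖cc i‖ ≤ R - rr i then cc i else (1 - rr i / (2*R)) • cc i with hγdef
  set ρv : ℕ → ℝ := fun i => if ‖cc i‖ ≤ R - rr i then rr i else rr i / 4 with hρdef
  set lamv : ℕ → ℝ := fun i => 4 / (5 * ρv i) with hlamdef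
  have hρpos : ∀ i, 0 < ρv i := by
    intro i
    simp only [hρdef]
    split_ifs
    · exact hrr0 i
    · have := hrr0 i; linarith
  have hl0 : ∀ i, 0 < lamv i := by
    intro i
    simp only [hlamdef]
    have := hρpos i
    positivity
  have hl : ∀ i, lamv i * ρv i = 4/5 := by
    intro i
    simp only [hlamdef]
    have h5 : ρv i ≠ 0 := ne_of_gt (hρpos i)
    field_simp
  -- the zero-set of each layer is contained in the corresponding ball intersected with K
  have hzero_sub : ∀ q (hqN : q < N' + 1), ∀ z : Euc n, ‖z - γv q‖ < ρv q →
      z ∈ Metric.ball (c ⟨q, hqN⟩) (r ⟨q, hqN⟩) ∩ K := by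
    intro q hqN z hz
    have hcceq : cc q = c ⟨q, hqN⟩ := by simp only [hccdef]; rw [dif_pos hqN]
    have hrreq : rr q = r ⟨q, hqN⟩ := by simp only [hrrdef]; rw [dif_pos hqN]
    by_cases hinn : ‖cc q‖ ≤ R - rr q
    · have hγ : γv q = cc q := by simp only [hγdef]; simp [if_pos hinn]
      have hρq : ρv q = rr q := by simp only [hρdef]; simp [if_pos hinn]
      rw [hγ, hρq] at hz
      constructor
      · rw [Metric.mem_ball, dist_eq_norm, ← hcceq, ← hrreq]; exact hz
      · rw [hKdef, Metric.mem_closedBall, dist_zero_right]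
        have h1 : ‖z‖ ≤ ‖z - cc q‖ + ‖cc q‖ := by
          simpa using norm_add_le (z - cc q) (cc q)
        have := hrr0 q
        linarith
    · push_neg at hinn
      have hγ : γv q = (1 - rr q / (2*R)) • cc q := by simp only [hγdef]; simp [if_neg (not_le.2 hinn)]
      have hρq : ρv q = rr q / 4 := by simp only [hρdef]; simp [if_neg (not_le.2 hinn)]
      have hz4 : ‖z - γv q‖ < rr q / 4 := by rw [hρq] at hz; exact hz
      have hRpos : (0:ℝ) < R := by linarith
      have hrrq := hrr0 q
      have ha0 : 0 ≤ rr q / (2*R) := by positivity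
      have hgc : ‖γv q - cc q‖ = rr q / (2*R) * ‖cc q‖ := by
        rw [hγ]
        have hsm : (1 - rr q / (2*R)) • cc q - cc q = (-(rr q / (2*R))) • cc q := by
          have : cc q = (1:ℝ) • cc q := (one_smul ℝ (cc q)).symm
          nth_rewrite 2 [this]
          rw [← sub_smul]
          congr 1
          ring
        rw [hsm, norm_smul, Real.norm_eq_abs, abs_neg, abs_of_nonneg ha0]
      have hgcR : ‖γv q - cc q‖ ≤ rr q / 2 := by
        rw [hgc]
        calc rr q / (2*R) * ‖cc q‖ ≤ rr q / (2*R) * R :=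
              mul_le_mul_of_nonneg_left (hccR q) ha0
          _ = rr q / 2 := by field_simp
      have htri : ‖z - cc q‖ ≤ ‖z - γv q‖ + ‖γv q - cc q‖ := by
        have := dist_triangle z (γv q) (cc q)
        simpa [dist_eq_norm] using this
      have hzc : ‖z - cc q‖ < rr q := by linarith
      constructor
      · rw [Metric.mem_ball, dist_eq_norm, ← hcceq, ← hrreq]; exact hzc
      · rw [hKdef, Metric.mem_closedBall, dist_zero_right]
        have hγn : ‖γv q‖ ≤ R - rr q / 2 := by
          rw [hγ, norm_smul, Real.norm_eq_abs]
          have hle1 : rr q / (2*R) ≤ 1 := by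
            rw [div_le_one (by linarith)]
            have := hrr1 q
            linarith
          rw [abs_of_nonneg (by linarith)]
          calc (1 - rr q / (2*R)) * ‖cc q‖ ≤ (1 - rr q / (2*R)) * R :=
                mul_le_mul_of_nonneg_left (hccR q) (by linarith)
            _ = R - rr q / (2*R) * R := by ring
            _ = R - rr q / 2 := by congr 1; field_simp
        have h1 : ‖z‖ ≤ ‖z - γv q‖ + ‖γv q‖ := by
          simpa using norm_add_le (z - γv q) (γv q)
        linarith
  -- assemble the network
  set yv : ℕ → Euc m := fun q => f (cc q) with hyvdef
  refine ⟨Wmat n lamv γv, Bvec n lamv γv, Amat n N' (lamv N') (γv N') A₀ b₀ yv, yv N', ?_⟩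
  intro x
  rcases invariant n lamv γv ρv hρpos hl0 hl N' x with ⟨hlive, havoid⟩ | ⟨q, hq, hmark, hin⟩
  · -- live case : output is the affine map
    have hout : mulVecE (Amat n N' (lamv N') (γv N') A₀ b₀ yv)
        (hiddenFF n (Wmat n lamv γv) (Bvec n lamv γv) (N'+1) x) + yv N'
        = mulVecE A₀ x + b₀ := by
      rw [hlive, final_apply]
      ext j
      show _ = (mulVecE A₀ x) j + b₀ j
      exact final_live n N' (lamv N') (ne_of_gt (hl0 N')) (γv N') A₀ b₀ yv x j
    rw [hout]
    apply hK₁ x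
    intro hxK₁
    have hxR2 : ‖x‖ ≤ R - 2 := by
      have := hRK₁ hxK₁
      rwa [Metric.mem_closedBall, dist_zero_right] at this
    have hxK : x ∈ K := by
      rw [hKdef, Metric.mem_closedBall, dist_zero_right]
      linarith
    obtain ⟨iU, hiU⟩ := Set.mem_iUnion.1 (hcov hxK)
    have hqN : (iU : ℕ) < N' + 1 := iU.2
    have hcceq : cc (iU : ℕ) = c iU := by simp only [hccdef]; rw [dif_pos hqN]
    have hrreq : rr (iU : ℕ) = r iU := by simp only [hrrdef]; rw [dif_pos hqN]
    have hdist : ‖x - c iU‖ < r iU := by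
      rw [Metric.mem_ball, dist_eq_norm] at hiU
      exact hiU
    have hav := havoid (iU : ℕ) (by omega)
    by_cases hinn : ‖cc (iU : ℕ)‖ ≤ R - rr (iU : ℕ)
    · have hγ : γv (iU : ℕ) = cc (iU : ℕ) := by simp only [hγdef]; simp [if_pos hinn]
      have hρq : ρv (iU : ℕ) = rr (iU : ℕ) := by simp only [hρdef]; simp [if_pos hinn]
      rw [hγ, hρq, hcceq, hrreq] at hav
      linarith
    · push_neg at hinn
      have h1 : ‖cc (iU : ℕ)‖ - ‖x‖ ≤ ‖cc (iU : ℕ) - x‖ := norm_sub_norm_le _ _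
      have h2 : ‖cc (iU : ℕ) - x‖ = ‖x - cc (iU : ℕ)‖ := norm_sub_rev _ _
      have h3 := hrr1 (iU : ℕ)
      rw [hcceq, hrreq] at hinn
      rw [hcceq] at h1 h2
      linarith
  · -- marked case : output is f (cc q)
    have hout : mulVecE (Amat n N' (lamv N') (γv N') A₀ b₀ yv)
        (hiddenFF n (Wmat n lamv γv) (Bvec n lamv γv) (N'+1) x) + yv N'
        = yv q := by
      rw [hmark, final_apply]
      ext j
      exact final_mark n N' (lamv N') (γv N') A₀ b₀ yv q hq j
    rw [hout]
    have hxmem := hzero_sub q (by omega) x hin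
    have hfmem := himg ⟨q, by omega⟩ (Set.mem_image_of_mem f hxmem)
    rw [Metric.mem_ball] at hfmem
    have hcceq : cc q = c ⟨q, by omega⟩ := by simp only [hccdef]; rw [dif_pos (by omega : q < N' + 1)]
    simp only [hyvdef]
    show ‖f (cc q) - f x‖ < ε
    rw [hcceq, ← dist_eq_norm, dist_comm]
    exact hfmem
end
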